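/- Fix γ ≥ 0 and define h : (0,1) → ℝ by h(s) = s log s + ((4γ+1)/(2γ+1)) (1−s) log(1−s) + ((2γs+1)/(2γ+1)) log(2γs+1). Then for every s ∈ (0,1), the second derivative of h satisfies s(1−s)(1+2γs) · h''(s) = 1 + 4γs. -/

import Mathlib

/-- For the entropy density of the pushing model,
`h(s) = s log s + ((4γ+1)/(2γ+1))(1−s)log(1−s) + ((2γs+1)/(2γ+1)) log(2γs+1)`,
the identity `s(1−s)(1+2γs) h''(s) = 1 + 4γs` holds on `(0,1)`. -/
theorem pushing_entropy_mobility_identity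
    (γ : ℝ) (hγ : 0 ≤ γ) (h : ℝ → ℝ)
    (hh : ∀ s : ℝ, h s = s * Real.log s
        + ((4 * γ + 1) / (2 * γ + 1)) * ((1 - s) * Real.log (1 - s))
        + ((2 * γ * s + 1) / (2 * γ + 1)) * Real.log (2 * γ * s + 1)) :
    ∀ s ∈ Set.Ioo (0 : ℝ) 1,
      s * (1 - s) * (1 + 2 * γ * s) * deriv (deriv h) s = 1 + 4 * γ * s := by
  have hγ1 : (2 * γ + 1) ≠ 0 := by positivity
  set a : ℝ := (4 * γ + 1) / (2 * γ + 1) with ha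
  set G : ℝ → ℝ := fun s => Real.log s + 1 + a * (-(Real.log (1 - s)) - 1)
      + (2 * γ / (2 * γ + 1)) * (Real.log (2 * γ * s + 1) + 1) with hG
  -- first derivative
  have hd1 : ∀ s ∈ Set.Ioo (0 : ℝ) 1, HasDerivAt h (G s) s := by
    intro s hs
    obtain ⟨hs0, hs1⟩ := hs
    have h1s : (0:ℝ) < 1 - s := by linarith
    have h2g : (0:ℝ) < 2 * γ * s + 1 := by positivity
    have hfun : h = fun x => x * Real.log x + a * ((1 - x) * Real.log (1 - x))
        + ((2 * γ * x + 1) / (2 * γ + 1)) * Real.log (2 * γ * x + 1) := by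
      funext x; rw [hh]
    rw [hfun]
    have A : HasDerivAt (fun x : ℝ => x * Real.log x) (Real.log s + 1) s := by
      have := (hasDerivAt_id s).mul (Real.hasDerivAt_log hs0.ne')
      refine this.congr_deriv ?_
      field_simp
      simp only [id]; ring
    have B : HasDerivAt (fun x : ℝ => (1 - x) * Real.log (1 - x))
        (-(Real.log (1 - s)) - 1) s := by
      have hu : HasDerivAt (fun x : ℝ => 1 - x) (-1) s := by
        simpa using (hasDerivAt_id s).const_sub (1:ℝ)
      have A' : HasDerivAt (fun y : ℝ => y * Real.log y) (Real.log (1 - s) + 1) (1 - s) := by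
        have := (hasDerivAt_id (1 - s)).mul (Real.hasDerivAt_log h1s.ne')
        refine this.congr_deriv ?_
        field_simp
        simp only [id]; ring
      have := A'.comp s hu
      refine this.congr_deriv ?_
      ring
    have C : HasDerivAt (fun x : ℝ => (2 * γ * x + 1) * Real.log (2 * γ * x + 1))
        ((Real.log (2 * γ * s + 1) + 1) * (2 * γ)) s := by
      have hu : HasDerivAt (fun x : ℝ => 2 * γ * x + 1) (2 * γ) s := by
        simpa using ((hasDerivAt_id s).const_mul (2 * γ)).add_const 1
      have A' : HasDerivAt (fun y : ℝ => y * Real.log y)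
          (Real.log (2 * γ * s + 1) + 1) (2 * γ * s + 1) := by
        have := (hasDerivAt_id (2 * γ * s + 1)).mul (Real.hasDerivAt_log h2g.ne')
        refine this.congr_deriv ?_
        field_simp
        simp only [id]; ring
      exact A'.comp s hu
    have total := (A.add (B.const_mul a)).add ((C.const_mul ((2 * γ + 1)⁻¹)))
    have heq : (fun x : ℝ => x * Real.log x + a * ((1 - x) * Real.log (1 - x))
        + ((2 * γ * x + 1) / (2 * γ + 1)) * Real.log (2 * γ * x + 1))
        = (fun x : ℝ => x * Real.log x + a * ((1 - x) * Real.log (1 - x))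
        + (2 * γ + 1)⁻¹ * ((2 * γ * x + 1) * Real.log (2 * γ * x + 1))) := by
      funext x; ring
    rw [heq]
    refine total.congr_deriv ?_
    rw [hG]
    field_simp
  -- deriv h agrees with G on the open interval
  have hEq : Set.EqOn (deriv h) G (Set.Ioo (0:ℝ) 1) := fun s hs => (hd1 s hs).deriv
  intro s hs
  obtain ⟨hs0, hs1⟩ := hs
  have h1s : (0:ℝ) < 1 - s := by linarith
  have h2g : (0:ℝ) < 2 * γ * s + 1 := by positivity
  -- second derivative
  have hd2 : HasDerivAt G (s⁻¹ + a * (1 - s)⁻¹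
      + (2 * γ / (2 * γ + 1)) * ((2 * γ * s + 1)⁻¹ * (2 * γ))) s := by
    have A : HasDerivAt (fun x : ℝ => Real.log x + 1) s⁻¹ s := by
      simpa using (Real.hasDerivAt_log hs0.ne').add_const 1
    have B : HasDerivAt (fun x : ℝ => -(Real.log (1 - x)) - 1) (1 - s)⁻¹ s := by
      have hu : HasDerivAt (fun x : ℝ => 1 - x) (-1) s := by
        simpa using (hasDerivAt_id s).const_sub (1:ℝ)
      have := ((Real.hasDerivAt_log h1s.ne').comp s hu).neg.sub_const 1
      refine this.congr_deriv ?_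
      ring
    have C : HasDerivAt (fun x : ℝ => Real.log (2 * γ * x + 1) + 1)
        ((2 * γ * s + 1)⁻¹ * (2 * γ)) s := by
      have hu : HasDerivAt (fun x : ℝ => 2 * γ * x + 1) (2 * γ) s := by
        simpa using ((hasDerivAt_id s).const_mul (2 * γ)).add_const 1
      exact ((Real.hasDerivAt_log h2g.ne').comp s hu).add_const 1
    exact (A.add (B.const_mul a)).add (C.const_mul (2 * γ / (2 * γ + 1)))
  have hmem : Set.Ioo (0:ℝ) 1 ∈ nhds s := isOpen_Ioo.mem_nhds ⟨hs0, hs1⟩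
  have hfe : deriv h =ᶠ[nhds s] G := Filter.eventuallyEq_of_mem hmem hEq
  rw [Filter.EventuallyEq.deriv_eq hfe, hd2.deriv]
  have h2g' : (2 * γ * s + 1) ≠ 0 := h2g.ne'
  rw [ha]
  field_simp
  ring
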